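/- arXiv:1707.07351 — 2 statements merged into one kernel-verified Lean document; each statement's English description precedes it below -/
import Mathlib

section
/- Let K ⊆ ℝ^N be non-empty, closed and convex, and let f : K → ℝ^N be C¹ and satisfy (f(z) − f(w))ᵀ(z − w) ≤ 0 for all z, w ∈ K. Let z(t) and z'(t) be any two Carathéodory solutions on ℝ₊ of the projected differential equation ż = f(z) − P_{N_K(z)}(f(z)) taking values in K. Then the Euclidean distance |z(t) − z'(t)| is non-increasing in t. -/
open Set Filter MeasureTheory Metric
open scoped RealInnerProductSpace Topology NNReal

noncomputable section

open Classical in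
/-- Euclidean nearest-point projection onto a set `C` (junk value if no nearest point exists). -/
def projOn {E : Type*} [NormedAddCommGroup E] [InnerProductSpace ℝ E]
    (C : Set E) (x : E) : E :=
  if h : ∃ p, p ∈ C ∧ ∀ y ∈ C, ‖x - p‖ ≤ ‖x - y‖ then h.choose else 0

/-- Normal cone to `K` at `z`. -/
def normalCone {E : Type*} [NormedAddCommGroup E] [InnerProductSpace ℝ E]
    (K : Set E) (z : E) : Set E :=
  {v | ∀ w ∈ K, (inner ℝ v (w - z) : ℝ) ≤ 0}

/-- Vector field of the projected (subgradient) dynamics `f(z) - P_{N_K(z)}(f(z))`. -/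
def projField {E : Type*} [NormedAddCommGroup E] [InnerProductSpace ℝ E]
    (K : Set E) (f : E → E) (z : E) : E :=
  f z - projOn (normalCone K z) (f z)

/-- Carathéodory solution of `ż = g(z)` on `[0,∞)` (integral form), with values in `K`. -/
def IsSolFrom0 {E : Type*} [NormedAddCommGroup E] [InnerProductSpace ℝ E]
    (g : E → E) (K : Set E) (z : ℝ → E) : Prop :=
  (∀ t, 0 ≤ t → z t ∈ K) ∧ ∀ t, 0 ≤ t → z t = z 0 + ∫ s in (0:ℝ)..t, g (z s)

/-- Carathéodory solution of `ż = g(z)` on all of `ℝ` (integral form), with values in `K`. -/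
def IsSolOnReal {E : Type*} [NormedAddCommGroup E] [InnerProductSpace ℝ E]
    (g : E → E) (K : Set E) (z : ℝ → E) : Prop :=
  (∀ t, z t ∈ K) ∧ ∀ a b : ℝ, z b = z a + ∫ s in a..b, g (z s)

/-- The ω-limit set of the semi-flow of Carathéodory solutions of `ż = g(z)` in `K`. -/
def omegaSet {E : Type*} [NormedAddCommGroup E] [InnerProductSpace ℝ E]
    (g : E → E) (K : Set E) : Set E :=
  {p | ∃ z : ℝ → E, IsSolFrom0 g K z ∧ ∃ u : ℕ → ℝ,
    Tendsto u atTop atTop ∧ Tendsto (fun k => z (u k)) atTop (𝓝 p)}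

/-- A face of a convex set `K`. -/
def IsFace {E : Type*} [NormedAddCommGroup E] [InnerProductSpace ℝ E]
    (K F : Set E) : Prop :=
  F ⊆ K ∧ Convex ℝ F ∧ ∀ x ∈ K, ∀ y ∈ K, ∀ c : ℝ, 0 < c → c < 1 →
    c • x + (1 - c) • y ∈ F → (x ∈ F ∧ y ∈ F)

/-- The minimal face of `K` containing `A`. -/
def minFace {E : Type*} [NormedAddCommGroup E] [InnerProductSpace ℝ E]
    (K A : Set E) : Set E :=
  ⋂₀ {F | IsFace K F ∧ A ⊆ F}

/-- The saddle-point vector field `(φ_x, -φ_y)`: coordinates with index `< p` are the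
maximizing (`x`) variables, the remaining ones the minimizing (`y`) variables. -/
def gradField (N p : ℕ) (φ : EuclideanSpace ℝ (Fin N) → ℝ)
    (z : EuclideanSpace ℝ (Fin N)) : EuclideanSpace ℝ (Fin N) :=
  WithLp.toLp 2 (fun i : Fin N => if (i : ℕ) < p then gradient φ z i else -(gradient φ z i))

/-- `C`-restricted saddle point of `φ`, with maximizing coordinates those of index `< p`. -/
def IsSaddlePt (N p : ℕ) (C : Set (EuclideanSpace ℝ (Fin N)))
    (φ : EuclideanSpace ℝ (Fin N) → ℝ) (zb : EuclideanSpace ℝ (Fin N)) : Prop :=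
  zb ∈ C ∧ ∀ w ∈ C,
    ((∀ i : Fin N, ¬ (i : ℕ) < p → w i = zb i) → φ w ≤ φ zb) ∧
    ((∀ i : Fin N, (i : ℕ) < p → w i = zb i) → φ zb ≤ φ w)

/-- The set of `C`-restricted saddle points. -/
def saddleSet (N p : ℕ) (C : Set (EuclideanSpace ℝ (Fin N)))
    (φ : EuclideanSpace ℝ (Fin N) → ℝ) : Set (EuclideanSpace ℝ (Fin N)) :=
  {z | IsSaddlePt N p C φ z}

/-- Global convergence of the subgradient method on `C` applied to `φ`:
every Carathéodory solution converges to the set of `C`-restricted saddle points. -/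
def GloballyConvergent (N p : ℕ) (C : Set (EuclideanSpace ℝ (Fin N)))
    (φ : EuclideanSpace ℝ (Fin N) → ℝ) : Prop :=
  ∀ z : ℝ → EuclideanSpace ℝ (Fin N),
    IsSolFrom0 (projField C (gradField N p φ)) C z →
    Tendsto (fun t => infDist (z t) (saddleSet N p C φ)) atTop (𝓝 0)

/-- `φ` is concave-convex on `C`: concave in the maximizing coordinates (index `< p`) on every
section of `C`, convex in the minimizing coordinates on every section of `C`. -/
def ConcaveConvexOn' (N p : ℕ) (C : Set (EuclideanSpace ℝ (Fin N)))
    (φ : EuclideanSpace ℝ (Fin N) → ℝ) : Prop :=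
  (∀ z₀ : EuclideanSpace ℝ (Fin N),
    ConcaveOn ℝ {w ∈ C | ∀ i : Fin N, ¬ (i : ℕ) < p → w i = z₀ i} φ) ∧
  (∀ z₀ : EuclideanSpace ℝ (Fin N),
    ConvexOn ℝ {w ∈ C | ∀ i : Fin N, (i : ℕ) < p → w i = z₀ i} φ)



section AuxStability
open intervalIntegral

variable {E : Type*} [NormedAddCommGroup E] [InnerProductSpace ℝ E] [CompleteSpace E]

lemma inner_right_eq_flip (c : E) :
    (fun r : E => ⟪r, c⟫) = fun r => ((innerSL ℝ (E := E)).flip c) r := by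
  funext r; rw [ContinuousLinearMap.flip_apply]; rfl

lemma inner_comp_intervalIntegrable {a b : ℝ} {H : ℝ → E}
    (hH : IntervalIntegrable H volume a b) (c : E) :
    IntervalIntegrable (fun r => ⟪H r, c⟫) volume a b := by
  have : (fun r => ⟪H r, c⟫) = fun r => ((innerSL ℝ (E := E)).flip c) (H r) := by
    funext r; rw [ContinuousLinearMap.flip_apply]; rfl
  rw [this]
  exact ⟨(ContinuousLinearMap.integrable_comp _ hH.1),
    (ContinuousLinearMap.integrable_comp _ hH.2)⟩

lemma inner_intervalIntegral_right {a b : ℝ} {H : ℝ → E}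
    (hH : IntervalIntegrable H volume a b) (c : E) :
    ⟪∫ r in a..b, H r, c⟫ = ∫ r in a..b, ⟪H r, c⟫ := by
  have h := ((innerSL ℝ (E := E)).flip c).intervalIntegral_comp_comm hH
  have e1 : (fun r => ⟪H r, c⟫) = fun r => ((innerSL ℝ (E := E)).flip c) (H r) := by
    funext r; rw [ContinuousLinearMap.flip_apply]; rfl
  rw [e1, h, ContinuousLinearMap.flip_apply]
  rfl

lemma normSq_le_of_integral_rep {s t : ℝ} (hst : s ≤ t) {H D : ℝ → E} {ψ : ℝ → ℝ}
    (hH : IntervalIntegrable H volume s t)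
    (hψ : IntervalIntegrable ψ volume s t)
    (hD : ∀ b ∈ Icc s t, D b = D s + ∫ r in s..b, H r)
    (hpt : ∀ r ∈ Icc s t, ⟪H r, D r⟫ ≤ ψ r) :
    ‖D t‖ ^ 2 ≤ ‖D s‖ ^ 2 + 2 * ∫ r in s..t, ψ r := by
  have hsub : ∀ {a b : ℝ}, s ≤ a → a ≤ b → b ≤ t → IntervalIntegrable H volume a b := by
    intro a b ha hab hb
    refine hH.mono_set (uIcc_subset_uIcc ?_ ?_) <;> rw [uIcc_of_le hst]
    · exact ⟨ha, hab.trans hb⟩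
    · exact ⟨ha.trans hab, hb⟩
  have hψsub : ∀ {a b : ℝ}, s ≤ a → a ≤ b → b ≤ t → IntervalIntegrable ψ volume a b := by
    intro a b ha hab hb
    refine hψ.mono_set (uIcc_subset_uIcc ?_ ?_) <;> rw [uIcc_of_le hst]
    · exact ⟨ha, hab.trans hb⟩
    · exact ⟨ha.trans hab, hb⟩
  have hDcont : ContinuousOn D (Icc s t) := by
    have h1 : ContinuousOn (fun b => ∫ r in s..b, H r) (uIcc s t) :=
      intervalIntegral.continuousOn_primitive_interval' hH left_mem_uIcc
    have h2 : ContinuousOn (fun b => D s + ∫ r in s..b, H r) (Icc s t) :=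
      continuousOn_const.add (h1.mono (by rw [uIcc_of_le hst]))
    exact h2.congr fun b hb => hD b hb
  refine le_of_forall_pos_le_add fun ε hε => ?_
  set B : ℝ := ∫ r in s..t, ‖H r‖ with hBdef
  have hB0 : 0 ≤ B := intervalIntegral.integral_nonneg hst fun r _ => norm_nonneg _
  set ε' : ℝ := ε / (2 * (B + 1)) with hε'def
  have hε'0 : 0 < ε' := by positivity
  have hUC := (isCompact_Icc.uniformContinuousOn_of_continuous hDcont)
  rw [Metric.uniformContinuousOn_iff] at hUC
  obtain ⟨δ, hδ0, hδ⟩ := hUC ε' hε'0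
  obtain ⟨n, hn⟩ := exists_nat_gt ((t - s) / δ)
  have hn0 : 0 < n := by
    have : (0:ℝ) ≤ (t - s)/δ := div_nonneg (by linarith) hδ0.le
    exact_mod_cast lt_of_le_of_lt this hn
  have hnR : (0:ℝ) < n := by exact_mod_cast hn0
  set m : ℝ := (t - s) / n with hmdef
  have hm0 : 0 ≤ m := div_nonneg (by linarith) hnR.le
  have hmδ : m < δ := by
    rw [hmdef, div_lt_iff₀ hnR]
    calc t - s = ((t-s)/δ) * δ := by field_simp
    _ < n * δ := mul_lt_mul_of_pos_right hn hδ0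
    _ = δ * n := by ring
  set τ : ℕ → ℝ := fun i => s + i * m with hτdef
  have hτ0 : τ 0 = s := by simp [hτdef]
  have hτn : τ n = t := by
    simp only [hτdef, hmdef]
    field_simp
    ring
  have hτ_mono : ∀ i j : ℕ, i ≤ j → τ i ≤ τ j := by
    intro i j hij
    simp only [hτdef]
    have : (i:ℝ) ≤ j := by exact_mod_cast hij
    nlinarith
  have hτ_mem : ∀ i ≤ n, τ i ∈ Icc s t := by
    intro i hi
    constructor
    · rw [← hτ0]; exact hτ_mono 0 i (Nat.zero_le _)
    · rw [← hτn]; exact hτ_mono i n hi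
  have hτ_step : ∀ i : ℕ, τ (i+1) - τ i = m := by
    intro i; simp only [hτdef]; push_cast; ring
  -- per-term bound
  have hterm : ∀ i < n, ‖D (τ (i+1))‖^2 - ‖D (τ i)‖^2
      ≤ ∫ r in τ i..τ (i+1), (2 * ψ r + 2 * ε' * ‖H r‖) := by
    intro i hi
    set a := τ i with hadef
    set b := τ (i+1) with hbdef
    have ha : a ∈ Icc s t := hτ_mem i hi.le
    have hb : b ∈ Icc s t := hτ_mem (i+1) hi
    have hab : a ≤ b := hτ_mono i (i+1) (Nat.le_succ _)
    have hHab : IntervalIntegrable H volume a b := hsub ha.1 hab hb.2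
    have hDab : D b - D a = ∫ r in a..b, H r := by
      rw [hD b hb, hD a ha,
        ← integral_interval_sub_left (hsub le_rfl hb.1 hb.2) (hsub le_rfl ha.1 ha.2)]
      abel
    have hid : ‖D b‖^2 - ‖D a‖^2 = ⟪D b - D a, D b + D a⟫ := by
      simp only [inner_sub_left, inner_add_right, real_inner_self_eq_norm_sq]
      have h1 : ⟪D b, D a⟫ = ⟪D a, D b⟫ := real_inner_comm _ _
      linarith [h1]
    rw [hid, hDab, inner_intervalIntegral_right hHab]
    -- pointwise bound on the integrand
    have hptw : ∀ r ∈ Icc a b, ⟪H r, D b + D a⟫ ≤ 2 * ψ r + 2 * ε' * ‖H r‖ := by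
      intro r hr
      have hrst : r ∈ Icc s t := ⟨ha.1.trans hr.1, hr.2.trans hb.2⟩
      have hsplit : ⟪H r, D b + D a⟫
          = 2 * ⟪H r, D r⟫ + ⟪H r, D a - D r⟫ + ⟪H r, D b - D r⟫ := by
        simp only [inner_add_right, inner_sub_right]
        ring
      have hclose : ∀ x ∈ Icc s t, dist x r < δ → ⟪H r, D x - D r⟫ ≤ ε' * ‖H r‖ := by
        intro x hx hdx
        calc ⟪H r, D x - D r⟫ ≤ ‖H r‖ * ‖D x - D r‖ := real_inner_le_norm _ _
        _ ≤ ‖H r‖ * ε' := by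
            refine mul_le_mul_of_nonneg_left ?_ (norm_nonneg _)
            rw [← dist_eq_norm]
            exact (hδ x hx r hrst hdx).le
        _ = ε' * ‖H r‖ := by ring
      have hda : dist a r < δ := by
        rw [Real.dist_eq, abs_sub_comm, abs_of_nonneg (by linarith [hr.1])]
        have : b - a = m := hτ_step i
        linarith [hr.2, hmδ]
      have hdb : dist b r < δ := by
        rw [Real.dist_eq, abs_of_nonneg (by linarith [hr.2])]
        have : b - a = m := hτ_step i
        linarith [hr.1, hmδ]
      have h1 := hclose a ha hda
      have h2 := hclose b hb hdb
      have h3 := hpt r hrst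
      linarith [hsplit, h1, h2, h3]
    -- integrate the pointwise bound
    have hint1 : IntervalIntegrable (fun r => ⟪H r, D b + D a⟫) volume a b :=
      inner_comp_intervalIntegrable hHab _
    have hint2 : IntervalIntegrable (fun r => 2 * ψ r + 2 * ε' * ‖H r‖) volume a b := by
      exact ((hψsub ha.1 hab hb.2).const_mul 2).add ((hHab.norm).const_mul (2 * ε'))
    exact intervalIntegral.integral_mono_on hab hint1 hint2 hptw
  -- sum up
  have hsum1 : ‖D t‖^2 - ‖D s‖^2
      = ∑ i ∈ Finset.range n, (‖D (τ (i+1))‖^2 - ‖D (τ i)‖^2) := by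
    rw [Finset.sum_range_sub (fun i => ‖D (τ i)‖^2), hτ0, hτn]
  have hsum2 : ∑ i ∈ Finset.range n, (‖D (τ (i+1))‖^2 - ‖D (τ i)‖^2)
      ≤ ∑ i ∈ Finset.range n, ∫ r in τ i..τ (i+1), (2 * ψ r + 2 * ε' * ‖H r‖) :=
    Finset.sum_le_sum fun i hi => hterm i (Finset.mem_range.mp hi)
  have hsum3 : ∑ i ∈ Finset.range n, ∫ r in τ i..τ (i+1), (2 * ψ r + 2 * ε' * ‖H r‖)
      = ∫ r in s..t, (2 * ψ r + 2 * ε' * ‖H r‖) := by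
    have hint : ∀ k < n, IntervalIntegrable (fun r => 2 * ψ r + 2 * ε' * ‖H r‖) volume (τ k) (τ (k+1)) := by
      intro k hk
      have hka := hτ_mem k hk.le
      have hkb := hτ_mem (k+1) hk
      have := hτ_mono k (k+1) (Nat.le_succ _)
      exact ((hψsub hka.1 this hkb.2).const_mul 2).add
        (((hsub hka.1 this hkb.2).norm).const_mul (2 * ε'))
    rw [intervalIntegral.sum_integral_adjacent_intervals hint, hτ0, hτn]
  have hsum4 : ∫ r in s..t, (2 * ψ r + 2 * ε' * ‖H r‖)
      = 2 * (∫ r in s..t, ψ r) + 2 * ε' * B := by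
    rw [intervalIntegral.integral_add (hψ.const_mul 2) (hH.norm.const_mul (2*ε'))]
    rw [intervalIntegral.integral_const_mul, intervalIntegral.integral_const_mul]
  have hfin : 2 * ε' * B ≤ ε := by
    have hB1 : (0:ℝ) < B + 1 := by linarith
    calc 2 * ε' * B ≤ 2 * ε' * (B + 1) := by nlinarith [hε'0.le]
    _ = ε := by rw [hε'def]; field_simp
  linarith [hsum1, hsum2, hsum3.le, hsum3.ge, hsum4.le, hsum4.ge, hfin]


section ProjFacts
variable {E : Type*} [NormedAddCommGroup E] [InnerProductSpace ℝ E]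

lemma projOn_spec [ProperSpace E] {C : Set E} (hC : IsClosed C) (hne : C.Nonempty) (x : E) :
    projOn C x ∈ C ∧ ∀ y ∈ C, ‖x - projOn C x‖ ≤ ‖x - y‖ := by
  have h : ∃ p, p ∈ C ∧ ∀ y ∈ C, ‖x - p‖ ≤ ‖x - y‖ := by
    obtain ⟨p, hp, hd⟩ := hC.exists_infDist_eq_dist hne x
    refine ⟨p, hp, fun y hy => ?_⟩
    rw [← dist_eq_norm, ← dist_eq_norm, ← hd]
    exact Metric.infDist_le_dist_of_mem hy
  rw [projOn, dif_pos h]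
  exact h.choose_spec

lemma zero_mem_normalCone (K : Set E) (z : E) : (0:E) ∈ normalCone K z := by
  intro w _; simp

lemma isClosed_normalCone (K : Set E) (z : E) : IsClosed (normalCone K z) := by
  have : normalCone K z = ⋂ w ∈ K, {v : E | ⟪v, w - z⟫ ≤ 0} := by
    ext v; simp [normalCone]
  rw [this]
  refine isClosed_biInter fun w _ => isClosed_le ?_ continuous_const
  exact continuous_id.inner continuous_const

lemma projOn_normalCone_mem [ProperSpace E] (K : Set E) (y v : E) :
    projOn (normalCone K y) v ∈ normalCone K y :=
  (projOn_spec (isClosed_normalCone K y) ⟨0, zero_mem_normalCone K y⟩ v).1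

lemma norm_projField_le [ProperSpace E] (K : Set E) (f : E → E) (y : E) :
    ‖projField K f y‖ ≤ ‖f y‖ := by
  have h := (projOn_spec (isClosed_normalCone K y) ⟨0, zero_mem_normalCone K y⟩ (f y)).2
    0 (zero_mem_normalCone K y)
  simpa [projField] using h

lemma projField_inner_le [ProperSpace E] {K : Set E} (f : E → E) {a w : E}
    (ha : a ∈ K) (hw : w ∈ K) :
    ⟪projField K f a, a - w⟫ ≤ ⟪f a, a - w⟫ := by
  have hP := projOn_normalCone_mem K a (f a)
  have h0 : (inner ℝ (projOn (normalCone K a) (f a)) (w - a) : ℝ) ≤ 0 := hP w hw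
  have h1 : (inner ℝ (projOn (normalCone K a) (f a)) (a - w) : ℝ)
      = - inner ℝ (projOn (normalCone K a) (f a)) (w - a) := by
    rw [show a - w = -(w - a) by abel, inner_neg_right]
  simp only [projField, inner_sub_left]
  linarith

lemma projField_inner_le' [ProperSpace E] {K : Set E} {f : E → E}
    (hmono : ∀ z ∈ K, ∀ w ∈ K, (inner ℝ (f z - f w) (z - w) : ℝ) ≤ 0)
    {a w : E} (ha : a ∈ K) (hw : w ∈ K) :
    ⟪projField K f a, a - w⟫ ≤ ‖f w‖ * ‖a - w‖ := by
  have h1 := projField_inner_le f ha hw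
  have h2 := hmono a ha w hw
  have e : ⟪f a, a - w⟫ = ⟪f a - f w, a - w⟫ + ⟪f w, a - w⟫ := by
    rw [inner_sub_left]; ring
  have h3 : ⟪f w, a - w⟫ ≤ ‖f w‖ * ‖a - w‖ := real_inner_le_norm _ _
  linarith

lemma projField_mono [ProperSpace E] {K : Set E} {f : E → E}
    (hmono : ∀ z ∈ K, ∀ w ∈ K, (inner ℝ (f z - f w) (z - w) : ℝ) ≤ 0)
    {a b : E} (ha : a ∈ K) (hb : b ∈ K) :
    ⟪projField K f a - projField K f b, a - b⟫ ≤ 0 := by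
  have h1 := projField_inner_le f ha hb
  have h2 := projField_inner_le f hb ha
  have hm := hmono a ha b hb
  have e1 : ⟪projField K f a - projField K f b, a - b⟫
      = ⟪projField K f a, a - b⟫ + ⟪projField K f b, b - a⟫ := by
    rw [inner_sub_left, show b - a = -(a - b) by abel, inner_neg_right]; ring
  have e2 : ⟪f a - f b, a - b⟫ = ⟪f a, a - b⟫ + ⟪f b, b - a⟫ := by
    rw [inner_sub_left, show b - a = -(a - b) by abel, inner_neg_right]; ring
  linarith

end ProjFacts

omit [CompleteSpace E] in
lemma continuousOn_of_rep {s t : ℝ} (hst : s ≤ t) {H D : ℝ → E}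
    (hH : IntervalIntegrable H volume s t)
    (hD : ∀ b ∈ Icc s t, D b = D s + ∫ r in s..b, H r) :
    ContinuousOn D (Icc s t) := by
  have h1 : ContinuousOn (fun b => ∫ r in s..b, H r) (uIcc s t) :=
    intervalIntegral.continuousOn_primitive_interval' hH left_mem_uIcc
  have h2 : ContinuousOn (fun b => D s + ∫ r in s..b, H r) (Icc s t) :=
    continuousOn_const.add (h1.mono (by rw [uIcc_of_le hst]))
  exact h2.congr fun b hb => hD b hb

lemma sol_integrable_aux {N : ℕ} {K : Set (EuclideanSpace ℝ (Fin N))}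
    (hKcl : IsClosed K)
    {f : EuclideanSpace ℝ (Fin N) → EuclideanSpace ℝ (Fin N)}
    (hf : ContDiffOn ℝ 1 f K)
    (hmono : ∀ z ∈ K, ∀ w ∈ K, (inner ℝ (f z - f w) (z - w) : ℝ) ≤ 0)
    {z : ℝ → EuclideanSpace ℝ (Fin N)} (hz : IsSolFrom0 (projField K f) K z) :
    ∀ t, 0 ≤ t → IntervalIntegrable (fun r => projField K f (z r)) volume 0 t := by
  obtain ⟨hzK, hzeq⟩ := hz
  intro t0 ht0
  by_contra hne
  set G : ℝ → EuclideanSpace ℝ (Fin N) := fun r => projField K f (z r) with hGdef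
  set S : Set ℝ := {u | u ∈ Icc 0 t0 ∧ IntervalIntegrable G volume 0 u} with hSdef
  have h0S : (0:ℝ) ∈ S := ⟨⟨le_rfl, ht0⟩, IntervalIntegrable.refl⟩
  have hSne : S.Nonempty := ⟨0, h0S⟩
  have hSbd : BddAbove S := ⟨t0, fun u hu => hu.1.2⟩
  set T := sSup S with hTdef
  have hT_mem : T ∈ Icc 0 t0 := ⟨le_csSup hSbd h0S, csSup_le hSne fun u hu => hu.1.2⟩
  have hdc : ∀ u, 0 ≤ u → u < T → IntervalIntegrable G volume 0 u := by
    intro u hu huT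
    obtain ⟨v, hvS, huv⟩ := exists_lt_of_lt_csSup hSne huT
    refine hvS.2.mono_set (uIcc_subset_uIcc left_mem_uIcc ?_)
    rw [uIcc_of_le (hu.trans huv.le)]
    exact ⟨hu, huv.le⟩
  set M : ℝ := ‖f (z 0)‖ with hMdef
  have hM0 : 0 ≤ M := norm_nonneg _
  have hz00 : z 0 ∈ K := hzK 0 le_rfl
  -- a priori bound on ‖z r - z 0‖ for r < T
  have hbound : ∀ r, 0 ≤ r → r < T → ‖z r - z 0‖ ≤ 2 * M * T := by
    intro r hr hrT
    set u : ℝ := (r + T) / 2 with hudef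
    have hru : r < u := by rw [hudef]; linarith
    have huT : u < T := by rw [hudef]; linarith
    have hu0 : 0 ≤ u := hr.trans hru.le
    have hint : IntervalIntegrable G volume 0 u := hdc u hu0 huT
    set D : ℝ → EuclideanSpace ℝ (Fin N) := fun x => z x - z 0 with hDdef
    have hDrep : ∀ x ∈ Icc (0:ℝ) u, D x = D 0 + ∫ w in (0:ℝ)..x, G w := by
      intro x hx
      simp only [hDdef]
      rw [hzeq x hx.1]
      abel
    have hDcont : ContinuousOn D (Icc 0 u) := continuousOn_of_rep hu0 hint hDrep
    obtain ⟨c, hc_mem, hc_max⟩ :=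
      isCompact_Icc.exists_isMaxOn (nonempty_Icc.mpr hu0) hDcont.norm
    have hc0 : (0:ℝ) ≤ c := hc_mem.1
    have hkey := normSq_le_of_integral_rep hc0
      (hint.mono_set (uIcc_subset_uIcc left_mem_uIcc
        (by rw [uIcc_of_le hu0]; exact ⟨hc0, hc_mem.2⟩)))
      (_root_.intervalIntegrable_const (c := M * ‖D c‖))
      (fun b hb => hDrep b ⟨hb.1, hb.2.trans hc_mem.2⟩)
      (fun x hx => by
        have hxu : x ∈ Icc (0:ℝ) u := ⟨hx.1, hx.2.trans hc_mem.2⟩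
        have h1 : ⟪G x, D x⟫ ≤ M * ‖D x‖ := by
          simpa [hDdef, hMdef] using
            projField_inner_le' hmono (hzK x hx.1) hz00
        have h2 : ‖D x‖ ≤ ‖D c‖ := hc_max hxu
        nlinarith)
    have hD0 : ‖D 0‖ = 0 := by simp [hDdef]
    rw [intervalIntegral.integral_const, hD0] at hkey
    have hc_le_T : c ≤ T := hc_mem.2.trans huT.le
    have hDc : ‖D c‖ ≤ 2 * M * T := by
      have h2 : ‖D c‖ ^ 2 ≤ 2 * (M * ‖D c‖) * T := by
        have : (c - 0) * (M * ‖D c‖) ≤ T * (M * ‖D c‖) := by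
          have : 0 ≤ M * ‖D c‖ := by positivity
          nlinarith
        simp only [smul_eq_mul] at hkey
        nlinarith
      rcases le_or_gt ‖D c‖ (2*M*T) with h | h
      · exact h
      · exfalso
        have hx0 : 0 < ‖D c‖ := lt_of_le_of_lt (mul_nonneg (by linarith) hT_mem.1) h
        nlinarith [h2, mul_pos hx0 (sub_pos.mpr h)]
    calc ‖z r - z 0‖ = ‖D r‖ := rfl
    _ ≤ ‖D c‖ := hc_max ⟨hr, hru.le⟩
    _ ≤ 2 * M * T := hDc
  -- bound on G on [0, T)
  obtain ⟨C, hC⟩ := ((isCompact_closedBall (z 0) (2*M*T)).inter_left hKcl).exists_bound_of_continuousOn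
    ((hf.continuousOn).mono inter_subset_left)
  have hGbd : ∀ r, 0 ≤ r → r < T → ‖G r‖ ≤ C := by
    intro r h1 h2
    calc ‖G r‖ ≤ ‖f (z r)‖ := norm_projField_le K f (z r)
    _ ≤ C := hC _ ⟨hzK r h1, by
        rw [mem_closedBall, dist_eq_norm]
        exact hbound r h1 h2⟩
  -- integrability on [0, T]
  have hTS : IntervalIntegrable G volume 0 T := by
    rw [intervalIntegrable_iff_integrableOn_Ioc_of_le hT_mem.1]
    have hIoo : IntegrableOn G (Ioo 0 T) volume := by
      set a : ℕ → ℝ := fun n => T - T / (n + 2) with hadef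
      have ha_mem : ∀ n : ℕ, 0 ≤ a n ∧ a n < T ∨ T = 0 := by
        intro n
        rcases eq_or_lt_of_le hT_mem.1 with h | h
        · exact Or.inr h.symm
        · refine Or.inl ⟨?_, ?_⟩
          · rw [hadef]
            have h2 : T / ((n:ℝ) + 2) ≤ T / 1 := by
              apply div_le_div_of_nonneg_left h.le one_pos
              push_cast; linarith
            simp only
            rw [div_one] at h2; linarith
          · rw [hadef]
            have : 0 < T / ((n:ℝ)+2) := by positivity
            simp only; linarith
      have hunion : Ioo (0:ℝ) T = ⋃ n : ℕ, Ioc 0 (a n) := by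
        ext x
        simp only [mem_Ioo, mem_iUnion, mem_Ioc]
        constructor
        · rintro ⟨hx0, hxT⟩
          have hTpos : 0 < T := lt_trans hx0 hxT
          obtain ⟨n, hn⟩ := exists_nat_ge (T / (T - x))
          refine ⟨n, hx0, ?_⟩
          rw [hadef]
          simp only
          have hTx : 0 < T - x := by linarith
          have hn2 : (0:ℝ) < (n:ℝ) + 2 := by positivity
          have h1 : T / (T - x) ≤ (n:ℝ) + 2 := by
            have := hn
            push_cast
            linarith
          have hTle : T ≤ (T - x) * ((n:ℝ) + 2) := by
            calc T = (T / (T - x)) * (T - x) := by field_simp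
            _ ≤ ((n:ℝ) + 2) * (T - x) := mul_le_mul_of_nonneg_right h1 hTx.le
            _ = (T - x) * ((n:ℝ) + 2) := by ring
          have : T / ((n:ℝ) + 2) ≤ T - x := by
            rw [div_le_iff₀ hn2]
            linarith
          linarith
        · rintro ⟨n, hx0, hxa⟩
          rcases ha_mem n with ⟨h1, h2⟩ | h0
          · exact ⟨hx0, lt_of_le_of_lt hxa h2⟩
          · exfalso
            rw [hadef] at hxa
            simp only [h0] at hxa
            simp at hxa
            linarith
      have hmeas : AEStronglyMeasurable G (volume.restrict (Ioo 0 T)) := by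
        rw [hunion, aestronglyMeasurable_iUnion_iff]
        intro n
        rcases ha_mem n with ⟨h1, h2⟩ | h0
        · exact ((hdc (a n) h1 h2).1).aestronglyMeasurable
        · have : a n = 0 := by rw [hadef]; simp [h0]
          rw [this, Ioc_self, Measure.restrict_empty]
          exact aestronglyMeasurable_zero_measure G
      refine Integrable.mono' (g := fun _ => C) ?_ hmeas ?_
      · exact integrableOn_const measure_Ioo_lt_top.ne
      · exact (ae_restrict_iff' measurableSet_Ioo).2
          (ae_of_all _ fun r hr => hGbd r hr.1.le hr.2)
    exact hIoo.congr_set_ae (MeasureTheory.Ioo_ae_eq_Ioc (μ := volume) (a := (0:ℝ)) (b := T)).symm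
  -- T < t0 and the solution is frozen past T, contradiction
  have hTlt : T < t0 := lt_of_le_of_ne hT_mem.2 (fun h => hne (h ▸ hTS))
  have hzconst : ∀ r, T < r → z r = z 0 := by
    intro r hTr
    have hr0 : 0 ≤ r := hT_mem.1.trans hTr.le
    have hnint : ¬ IntervalIntegrable G volume 0 r := by
      intro hint
      rcases le_or_gt r t0 with h | h
      · exact absurd (le_csSup hSbd ⟨⟨hr0, h⟩, hint⟩) (not_le.mpr hTr)
      · exact hne (hint.mono_set (uIcc_subset_uIcc left_mem_uIcc
          (by rw [uIcc_of_le hr0]; exact ⟨ht0, h.le⟩)))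
    rw [hzeq r hr0, intervalIntegral.integral_undef hnint, add_zero]
  refine hne (hTS.trans ?_)
  rw [intervalIntegrable_iff_integrableOn_Ioc_of_le hTlt.le]
  have hconst : IntegrableOn (fun _ => projField K f (z 0)) (Ioc T t0) volume :=
    integrableOn_const measure_Ioc_lt_top.ne
  exact hconst.congr_fun (fun r hr => by simp only [hGdef]; rw [hzconst r hr.1])
    measurableSet_Ioc

end AuxStability

/-- **Pathwise stability of projected monotone dynamics.**  Any two Carathéodory solutions of
`ż = f(z) − P_{N_K(z)}(f(z))` on `[0,∞)` with values in `K` have non-increasing distance. -/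
theorem projected_dynamics_pathwise_stable
    {N : ℕ} (K : Set (EuclideanSpace ℝ (Fin N)))
    (hKne : K.Nonempty) (hKcl : IsClosed K) (hKco : Convex ℝ K)
    (f : EuclideanSpace ℝ (Fin N) → EuclideanSpace ℝ (Fin N))
    (hf : ContDiffOn ℝ 1 f K)
    (hmono : ∀ z ∈ K, ∀ w ∈ K, (inner ℝ (f z - f w) (z - w) : ℝ) ≤ 0)
    (z z' : ℝ → EuclideanSpace ℝ (Fin N))
    (hz : IsSolFrom0 (projField K f) K z)
    (hz' : IsSolFrom0 (projField K f) K z') :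
    ∀ s t : ℝ, 0 ≤ s → s ≤ t → dist (z t) (z' t) ≤ dist (z s) (z' s) := by
  intro s t hs hst
  have ht0 : 0 ≤ t := hs.trans hst
  have hGint : IntervalIntegrable (fun r => projField K f (z r)) volume 0 t :=
    sol_integrable_aux hKcl hf hmono hz t ht0
  have hG'int : IntervalIntegrable (fun r => projField K f (z' r)) volume 0 t :=
    sol_integrable_aux hKcl hf hmono hz' t ht0
  obtain ⟨hzK, hzeq⟩ := hz
  obtain ⟨hzK', hzeq'⟩ := hz'
  set G : ℝ → EuclideanSpace ℝ (Fin N) := fun r => projField K f (z r) with hG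
  set G' : ℝ → EuclideanSpace ℝ (Fin N) := fun r => projField K f (z' r) with hG'
  have subint : ∀ (F : ℝ → EuclideanSpace ℝ (Fin N)), IntervalIntegrable F volume 0 t →
      ∀ a b : ℝ, 0 ≤ a → a ≤ b → b ≤ t → IntervalIntegrable F volume a b := by
    intro F hF a b ha hab hb
    refine hF.mono_set (uIcc_subset_uIcc ?_ ?_) <;> rw [uIcc_of_le ht0]
    · exact ⟨ha, hab.trans hb⟩
    · exact ⟨ha.trans hab, hb⟩
  have hstep : ∀ b ∈ Icc s t,
      z b - z' b = (z s - z' s) + ∫ r in s..b, (G r - G' r) := by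
    intro b hb
    have hsb := hb.1
    have hbt := hb.2
    have h0b : 0 ≤ b := hs.trans hsb
    have h1 : z b = z s + ∫ r in s..b, G r := by
      rw [hzeq b h0b, hzeq s hs,
        ← intervalIntegral.integral_add_adjacent_intervals
          (subint _ hGint 0 s le_rfl hs hst)
          (subint _ hGint s b hs hsb hbt)]
      abel
    have h1' : z' b = z' s + ∫ r in s..b, G' r := by
      rw [hzeq' b h0b, hzeq' s hs,
        ← intervalIntegral.integral_add_adjacent_intervals
          (subint _ hG'int 0 s le_rfl hs hst)
          (subint _ hG'int s b hs hsb hbt)]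
      abel
    rw [intervalIntegral.integral_sub (subint _ hGint s b hs hsb hbt)
      (subint _ hG'int s b hs hsb hbt), h1, h1']
    abel
  have hkey := normSq_le_of_integral_rep (D := fun r => z r - z' r) hst
    ((subint _ hGint s t hs hst le_rfl).sub (subint _ hG'int s t hs hst le_rfl))
    (_root_.intervalIntegrable_const (c := (0:ℝ)))
    hstep
    (fun r hr => by
      have h := projField_mono hmono (hzK r (hs.trans hr.1)) (hzK' r (hs.trans hr.1))
      simpa using h)
  simp only [intervalIntegral.integral_const, smul_zero, mul_zero, add_zero] at hkey
  rw [dist_eq_norm, dist_eq_norm]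
  have h2 := Real.sqrt_le_sqrt hkey
  rwa [Real.sqrt_sq (norm_nonneg _), Real.sqrt_sq (norm_nonneg _)] at h2


end
end

section
/- Let φ(x₁,x₂,y) = −x₁²/2 + (x₁+x₂)y on ℝ³ and, for a ∈ ℝ, let K_a = {(x₁,x₂,y) ∈ ℝ³ : x₁ ≥ a}. If a > 0, the subgradient method on K_a applied to φ (the system ẋ₁ = [−x₁+y]⁺_{x₁−a}, ẋ₂ = y, ẏ = −x₁−x₂, where the projection forces ẋ₁ ≥ 0 when x₁ = a) is NOT globally convergent: it admits non-constant periodic solutions of the form x₁ = a, (x₂(t), y(t)) oscillating about (−a, 0) with angular frequency 1. -/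
open Set Filter MeasureTheory Metric
open scoped RealInnerProductSpace Topology NNReal

noncomputable section

/-! ### Auxiliary lemmas for Example 4(ii) -/

namespace SubgradAux

abbrev E3 := EuclideanSpace ℝ (Fin 3)

lemma comp_apply_le_norm (v : E3) (i : Fin 3) : |v i| ≤ ‖v‖ := by
  rw [EuclideanSpace.norm_eq]
  have h1 : |v i| = Real.sqrt (‖v i‖^2) := by
    rw [Real.sqrt_sq_eq_abs]; simp [Real.norm_eq_abs]
  rw [h1]
  apply Real.sqrt_le_sqrt
  exact Finset.single_le_sum (f := fun j => ‖v j‖^2) (fun j _ => by positivity) (Finset.mem_univ i)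

def gvec (z : E3) : E3 := WithLp.toLp 2 (fun i : Fin 3 => if i = 0 then -(z 0) + z 2 else if i = 1 then z 2 else z 0 + z 1)

lemma grad_phi (z : E3) :
    gradient (fun w : E3 => -(w 0)^2/2 + (w 0 + w 1) * w 2) z = gvec z := by
  apply HasGradientAt.gradient
  rw [hasGradientAt_iff_hasFDerivAt]
  have h0 : HasFDerivAt (fun w : E3 => w 0) (EuclideanSpace.proj (0:Fin 3) : E3 →L[ℝ] ℝ) z :=
    (EuclideanSpace.proj (0:Fin 3) : E3 →L[ℝ] ℝ).hasFDerivAt (x := z)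
  have h1 : HasFDerivAt (fun w : E3 => w 1) (EuclideanSpace.proj (1:Fin 3) : E3 →L[ℝ] ℝ) z :=
    (EuclideanSpace.proj (1:Fin 3) : E3 →L[ℝ] ℝ).hasFDerivAt (x := z)
  have h2 : HasFDerivAt (fun w : E3 => w 2) (EuclideanSpace.proj (2:Fin 3) : E3 →L[ℝ] ℝ) z :=
    (EuclideanSpace.proj (2:Fin 3) : E3 →L[ℝ] ℝ).hasFDerivAt (x := z)
  have H : HasFDerivAt (fun w : E3 => -(w 0)^2/2 + (w 0 + w 1) * w 2)
      ((-(z 0)) • (EuclideanSpace.proj (0:Fin 3) : E3 →L[ℝ] ℝ)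
        + ((z 2) • ((EuclideanSpace.proj (0:Fin 3) : E3 →L[ℝ] ℝ) + (EuclideanSpace.proj (1:Fin 3)))
          + (z 0 + z 1) • (EuclideanSpace.proj (2:Fin 3) : E3 →L[ℝ] ℝ))) z := by
    have hsq : HasFDerivAt (fun w : E3 => -(w 0)^2/2)
        ((-(z 0)) • (EuclideanSpace.proj (0:Fin 3) : E3 →L[ℝ] ℝ)) z := by
      have := ((h0.mul h0).const_mul (-(1:ℝ)/2))
      refine (this.congr_fderiv ?_).congr_of_eventuallyEq (Filter.Eventually.of_forall fun w => ?_)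
      · ext v
        simp only [ContinuousLinearMap.smul_apply, ContinuousLinearMap.add_apply, smul_eq_mul]
        ring
      · simp only [Pi.mul_apply]; ring
    have hmul : HasFDerivAt (fun w : E3 => (w 0 + w 1) * w 2)
        ((z 2) • ((EuclideanSpace.proj (0:Fin 3) : E3 →L[ℝ] ℝ) + (EuclideanSpace.proj (1:Fin 3)))
          + (z 0 + z 1) • (EuclideanSpace.proj (2:Fin 3) : E3 →L[ℝ] ℝ)) z := by
      have := (h0.add h1).mul h2
      exact this.congr_fderiv (add_comm _ _)
    exact hsq.add hmul
  refine H.congr_fderiv ?_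
  ext v
  simp [gvec, PiLp.inner_apply, Fin.sum_univ_three, InnerProductSpace.toDual]
  ring

lemma projOn_eq_of {E : Type*} [NormedAddCommGroup E] [InnerProductSpace ℝ E]
    {C : Set E} {x p : E} (hp : p ∈ C) (hmin : ∀ y ∈ C, ‖x - p‖ ≤ ‖x - y‖)
    (huniq : ∀ q ∈ C, ‖x - q‖ ≤ ‖x - p‖ → q = p) : projOn C x = p := by
  unfold projOn
  rw [dif_pos ⟨p, hp, hmin⟩]
  set h : ∃ p, p ∈ C ∧ ∀ y ∈ C, ‖x - p‖ ≤ ‖x - y‖ := ⟨p, hp, hmin⟩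
  obtain ⟨hq, hqmin⟩ := h.choose_spec
  exact huniq _ hq (hqmin p hp)

lemma mem_normalCone_iff (a : ℝ) (z : E3) (hz : z 0 = a) (q : E3) :
    q ∈ normalCone {w : E3 | a ≤ w 0} z ↔ q 0 ≤ 0 ∧ q 1 = 0 ∧ q 2 = 0 := by
  constructor
  · intro hq
    have key : ∀ (j : Fin 3) (t : ℝ), a ≤ (z + EuclideanSpace.single j t) 0 →
        q j * t ≤ 0 := by
      intro j t hmem
      have := hq (z + EuclideanSpace.single j t) hmem
      simp [PiLp.inner_apply, Fin.sum_univ_three, EuclideanSpace.single_apply] at this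
      linarith
    have h0 : q 0 ≤ 0 := by
      have := key 0 1 (by simp [EuclideanSpace.single_apply, hz])
      linarith
    have h1p := key 1 1 (by simp [EuclideanSpace.single_apply, hz])
    have h1m := key 1 (-1) (by simp [EuclideanSpace.single_apply, hz])
    have h2p := key 2 1 (by simp [EuclideanSpace.single_apply, hz])
    have h2m := key 2 (-1) (by simp [EuclideanSpace.single_apply, hz])
    refine ⟨h0, by linarith, by linarith⟩
  · rintro ⟨h0, h1, h2⟩ w hw
    simp only [Set.mem_setOf_eq] at hw
    have : (inner ℝ q (w - z) : ℝ) = q 0 * (w 0 - a) := by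
      simp [PiLp.inner_apply, Fin.sum_univ_three, h1, h2, hz]
      ring
    rw [this]
    exact mul_nonpos_of_nonpos_of_nonneg h0 (by linarith)

lemma proj_cone (a : ℝ) (z v : E3) (hz : z 0 = a) (hv : v 0 ≤ 0) :
    projOn (normalCone {w : E3 | a ≤ w 0} z) v = EuclideanSpace.single 0 (v 0) := by
  have hmemiff := mem_normalCone_iff a z hz
  have hpmem : EuclideanSpace.single (0 : Fin 3) (v 0) ∈ normalCone {w : E3 | a ≤ w 0} z := by
    rw [hmemiff]
    exact ⟨by simpa using hv, by simp [EuclideanSpace.single_apply],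
      by simp [EuclideanSpace.single_apply]⟩
  have normsq : ∀ q : E3, ‖v - q‖^2 = (v 0 - q 0)^2 + (v 1 - q 1)^2 + (v 2 - q 2)^2 := by
    intro q
    rw [EuclideanSpace.norm_eq, Real.sq_sqrt (by positivity)]
    simp [Fin.sum_univ_three, Real.norm_eq_abs, sq_abs]
  have hps : ∀ q : E3, q ∈ normalCone {w : E3 | a ≤ w 0} z →
      ‖v - EuclideanSpace.single (0:Fin 3) (v 0)‖^2 + (v 0 - q 0)^2 ≤ ‖v - q‖^2 := by
    intro q hq
    rw [hmemiff] at hq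
    obtain ⟨hq0, hq1, hq2⟩ := hq
    rw [normsq, normsq]
    simp [EuclideanSpace.single_apply, hq1, hq2]
    ring_nf
    linarith
  refine projOn_eq_of hpmem ?_ ?_
  · intro q hq
    have := hps q hq
    have h2 : ‖v - EuclideanSpace.single (0:Fin 3) (v 0)‖^2 ≤ ‖v - q‖^2 := by
      nlinarith [sq_nonneg (v 0 - q 0)]
    nlinarith [norm_nonneg (v - q), norm_nonneg (v - EuclideanSpace.single (0:Fin 3) (v 0))]
  · intro q hq hle
    have h1 := hps q hq
    have h2 : ‖v - q‖ ^2 ≤ ‖v - EuclideanSpace.single (0:Fin 3) (v 0)‖^2 := by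
      nlinarith [norm_nonneg (v - q), norm_nonneg (v - EuclideanSpace.single (0:Fin 3) (v 0))]
    have h4 : q 0 = v 0 := by nlinarith [sq_nonneg (v 0 - q 0)]
    rw [hmemiff] at hq
    ext i
    fin_cases i <;> simp [EuclideanSpace.single_apply, h4, hq.2.1, hq.2.2]

/-- The vector field of the projected dynamics on the face `{x₁ = a}` when `φ_{x₁} ≤ 0`. -/
lemma projField_formula (a : ℝ) (z : E3) (hz0 : z 0 = a) (hz2 : z 2 ≤ a) :
    projField {w : E3 | a ≤ w 0}
      (gradField 3 2 (fun w : E3 => -(w 0)^2/2 + (w 0 + w 1) * w 2)) z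
      = WithLp.toLp 2 (fun i : Fin 3 => if i = 0 then 0 else if i = 1 then z 2 else -(z 0 + z 1)) := by
  have hg : gradField 3 2 (fun w : E3 => -(w 0)^2/2 + (w 0 + w 1) * w 2) z
      = WithLp.toLp 2 (fun i : Fin 3 => if i = 0 then -(z 0) + z 2 else if i = 1 then z 2 else -(z 0 + z 1)) := by
    ext i
    unfold gradField
    rw [grad_phi]
    fin_cases i <;> simp [gvec]
  unfold projField
  rw [hg, proj_cone a z _ hz0 (by simp; linarith)]
  ext i
  rw [PiLp.sub_apply]
  fin_cases i <;> simp [EuclideanSpace.single_apply]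

/-- The periodic trajectory. -/
def zsol (a t : ℝ) : E3 :=
  WithLp.toLp 2 (fun i : Fin 3 => if i = 0 then a else if i = 1 then -a + (a/2) * Real.cos t else -(a/2) * Real.sin t)

lemma zsol_apply0 (a t : ℝ) : zsol a t 0 = a := rfl
lemma zsol_apply1 (a t : ℝ) : zsol a t 1 = -a + (a/2) * Real.cos t := rfl
lemma zsol_apply2 (a t : ℝ) : zsol a t 2 = -(a/2) * Real.sin t := rfl

/-- The saddle point. -/
def pt3 (a : ℝ) : E3 := WithLp.toLp 2 (fun i : Fin 3 => if i = 0 then a else if i = 1 then -a else 0)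

lemma pt3_apply0 (a : ℝ) : pt3 a 0 = a := rfl
lemma pt3_apply1 (a : ℝ) : pt3 a 1 = -a := rfl
lemma pt3_apply2 (a : ℝ) : pt3 a 2 = 0 := rfl

set_option maxHeartbeats 1000000 in
lemma saddle_eq (a : ℝ) (ha : 0 < a) :
    saddleSet 3 2 {w : E3 | a ≤ w 0} (fun w : E3 => -(w 0)^2/2 + (w 0 + w 1) * w 2)
      = {pt3 a} := by
  ext zb
  simp only [Set.mem_singleton_iff, saddleSet, Set.mem_setOf_eq, IsSaddlePt]
  constructor
  · rintro ⟨hmem, hsad⟩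
    have hmem0 : a ≤ zb 0 := hmem
    -- vary the `y` coordinate: z₁ + z₂ = 0
    have hy : ∀ s : ℝ, 0 ≤ (zb 0 + zb 1) * s := by
      intro s
      set w : E3 := WithLp.toLp 2 (fun i : Fin 3 => if i = 2 then zb 2 + s else zb i) with hw
      have hw0 : w 0 = zb 0 := rfl
      have hw1 : w 1 = zb 1 := rfl
      have hw2 : w 2 = zb 2 + s := rfl
      have hwK : w ∈ {w : E3 | a ≤ w 0} := by simpa [hw0] using hmem
      have := (hsad w hwK).2 (by
        intro i hi
        fin_cases i
        · exact hw0
        · exact hw1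
        · exact absurd hi (by norm_num))
      simp only [hw0, hw1, hw2] at this
      nlinarith [this]
    have hsum : zb 0 + zb 1 = 0 := by
      have h1 := hy 1
      have h2 := hy (-1)
      nlinarith
    -- vary the `x₂` coordinate: z₂ = 0
    have hx2 : ∀ s : ℝ, s * zb 2 ≤ 0 := by
      intro s
      set w : E3 := WithLp.toLp 2 (fun i : Fin 3 => if i = 1 then zb 1 + s else zb i) with hw
      have hw0 : w 0 = zb 0 := rfl
      have hw1 : w 1 = zb 1 + s := rfl
      have hw2 : w 2 = zb 2 := rfl
      have hwK : w ∈ {w : E3 | a ≤ w 0} := by simpa [hw0] using hmem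
      have := (hsad w hwK).1 (by
        intro i hi
        fin_cases i
        · exact absurd (by norm_num) hi
        · exact absurd (by norm_num) hi
        · exact hw2)
      simp only [hw0, hw1, hw2] at this
      nlinarith [this]
    have h2 : zb 2 = 0 := by
      have h1 := hx2 1
      have h2 := hx2 (-1)
      nlinarith
    -- vary the `x₁` coordinate: z₀ = a
    have h0 : zb 0 = a := by
      set w : E3 := WithLp.toLp 2 (fun i : Fin 3 => if i = 0 then a else zb i) with hw
      have hw0 : w 0 = a := rfl
      have hw1 : w 1 = zb 1 := rfl
      have hw2 : w 2 = zb 2 := rfl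
      have hwK : w ∈ {w : E3 | a ≤ w 0} := by simp [hw0]
      have := (hsad w hwK).1 (by
        intro i hi
        fin_cases i
        · exact absurd (by norm_num) hi
        · exact absurd (by norm_num) hi
        · exact hw2)
      simp only [hw0, hw1, hw2, h2] at this
      have hge : a ≤ zb 0 := hmem
      have hle : zb 0 ≤ a := by nlinarith
      exact le_antisymm hle hge
    have h1 : zb 1 = -a := by linarith [hsum, h0]
    ext i
    fin_cases i <;> simp [pt3, h0, h1, h2]
  · rintro rfl
    refine ⟨by simp [pt3_apply0], ?_⟩
    intro w hw
    have hwmem : a ≤ w 0 := hw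
    constructor
    · intro hcond
      have hw2 : w 2 = 0 := by
        have := hcond 2 (by norm_num)
        simpa [pt3_apply2] using this
      simp only [hw2, pt3_apply0, pt3_apply1, pt3_apply2]
      nlinarith [hwmem]
    · intro hcond
      have hw0 : w 0 = a := by
        have := hcond 0 (by norm_num)
        simpa [pt3_apply0] using this
      have hw1 : w 1 = -a := by
        have := hcond 1 (by norm_num)
        simpa [pt3_apply1] using this
      simp only [hw0, hw1, pt3_apply0, pt3_apply1, pt3_apply2]
      exact le_of_eq (by ring)

end SubgradAux


/-- **Non-convergence of the subgradient method on `K_a` for `a > 0`** (Example 4(ii)).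
For `φ(x₁,x₂,y) = −x₁²/2 + (x₁+x₂) y` and `K_a = {x₁ ≥ a}` with `a > 0`, the subgradient
method is not globally convergent: it admits non-constant periodic solutions with `x₁ ≡ a`
and `(x₂, y)` oscillating about `(−a, 0)` with angular frequency `1`. -/
theorem subgradient_method_Ka_not_convergent
    (a : ℝ) (ha : 0 < a)
    (φ : EuclideanSpace ℝ (Fin 3) → ℝ)
    (hφ : φ = fun z => -(z 0)^2/2 + (z 0 + z 1) * z 2)
    (Ka : Set (EuclideanSpace ℝ (Fin 3)))
    (hKa : Ka = {z | a ≤ z 0}) :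
    ¬ GloballyConvergent 3 2 Ka φ ∧
    ∃ z : ℝ → EuclideanSpace ℝ (Fin 3),
      IsSolFrom0 (projField Ka (gradField 3 2 φ)) Ka z ∧
      ∃ c d : ℝ, (c ≠ 0 ∨ d ≠ 0) ∧ ∀ t : ℝ, 0 ≤ t →
        z t 0 = a ∧
        z t 1 = -a + c * Real.cos t + d * Real.sin t ∧
        z t 2 = -c * Real.sin t + d * Real.cos t := by
  subst hφ hKa
  set u1 : SubgradAux.E3 := (-(a/2)) • EuclideanSpace.single (1:Fin 3) (1:ℝ) with hu1
  set u2 : SubgradAux.E3 := (-(a/2)) • EuclideanSpace.single (2:Fin 3) (1:ℝ) with hu2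
  have hz2le : ∀ t : ℝ, SubgradAux.zsol a t 2 ≤ a := by
    intro t
    rw [SubgradAux.zsol_apply2]
    nlinarith [Real.neg_one_le_sin t, ha.le]
  have hfield : ∀ s : ℝ,
      projField {z : EuclideanSpace ℝ (Fin 3) | a ≤ z 0}
        (gradField 3 2 (fun z : EuclideanSpace ℝ (Fin 3) => -(z 0)^2/2 + (z 0 + z 1) * z 2))
        (SubgradAux.zsol a s)
      = (Real.sin s) • u1 + (Real.cos s) • u2 := by
    intro s
    rw [SubgradAux.projField_formula a _ (SubgradAux.zsol_apply0 a s) (hz2le s)]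
    ext i
    fin_cases i <;>
      simp [hu1, hu2, SubgradAux.zsol, EuclideanSpace.single_apply, PiLp.add_apply,
        PiLp.smul_apply, smul_eq_mul] <;> ring
  have hsol : IsSolFrom0
      (projField {z : EuclideanSpace ℝ (Fin 3) | a ≤ z 0}
        (gradField 3 2 (fun z : EuclideanSpace ℝ (Fin 3) => -(z 0)^2/2 + (z 0 + z 1) * z 2)))
      {z : EuclideanSpace ℝ (Fin 3) | a ≤ z 0} (SubgradAux.zsol a) := by
    constructor
    · intro t _
      show a ≤ SubgradAux.zsol a t 0
      rw [SubgradAux.zsol_apply0]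
    · intro t _
      have hI1 : IntervalIntegrable (fun s : ℝ => Real.sin s • u1) MeasureTheory.volume 0 t :=
        (Real.continuous_sin.smul continuous_const).intervalIntegrable 0 t
      have hI2 : IntervalIntegrable (fun s : ℝ => Real.cos s • u2) MeasureTheory.volume 0 t :=
        (Real.continuous_cos.smul continuous_const).intervalIntegrable 0 t
      rw [intervalIntegral.integral_congr
        (g := fun s : ℝ => (Real.sin s) • u1 + (Real.cos s) • u2) (fun s _ => hfield s)]
      rw [intervalIntegral.integral_add hI1 hI2, intervalIntegral.integral_smul_const,
        intervalIntegral.integral_smul_const, integral_sin, integral_cos]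
      ext i
      fin_cases i <;>
        simp [hu1, hu2, SubgradAux.zsol, EuclideanSpace.single_apply, PiLp.add_apply,
          PiLp.smul_apply, smul_eq_mul, Real.sin_zero, Real.cos_zero] <;> ring
  constructor
  · intro hGC
    have hten := hGC (SubgradAux.zsol a) hsol
    rw [SubgradAux.saddle_eq a ha] at hten
    simp only [Metric.infDist_singleton] at hten
    have hev : ∀ᶠ t in atTop, dist (SubgradAux.zsol a t) (SubgradAux.pt3 a) < a/2 :=
      hten.eventually_lt_const (half_pos ha)
    obtain ⟨T, hT⟩ := eventually_atTop.mp hev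
    set t0 : ℝ := Real.pi/2 + (⌈T⌉₊ : ℝ) * (2 * Real.pi) with ht0
    have hsin : Real.sin t0 = 1 := by
      rw [ht0, Real.sin_add_nat_mul_two_pi, Real.sin_pi_div_two]
    have ht0ge : T ≤ t0 := by
      have h1 : (T : ℝ) ≤ (⌈T⌉₊ : ℝ) := Nat.le_ceil T
      have h2 : (0:ℝ) ≤ (⌈T⌉₊ : ℝ) := Nat.cast_nonneg _
      have hpi : (1:ℝ) ≤ 2 * Real.pi := by nlinarith [Real.pi_gt_three]
      have h3 : (⌈T⌉₊ : ℝ) * 1 ≤ (⌈T⌉₊ : ℝ) * (2 * Real.pi) :=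
        mul_le_mul_of_nonneg_left hpi h2
      rw [ht0]
      nlinarith [Real.pi_pos]
    have hcomp : (SubgradAux.zsol a t0 - SubgradAux.pt3 a) 2 = -(a/2) := by
      show SubgradAux.zsol a t0 2 - SubgradAux.pt3 a 2 = -(a/2)
      rw [SubgradAux.zsol_apply2, SubgradAux.pt3_apply2, hsin]
      ring
    have hbig := SubgradAux.comp_apply_le_norm (SubgradAux.zsol a t0 - SubgradAux.pt3 a) 2
    rw [hcomp, ← dist_eq_norm, abs_neg, abs_of_pos (half_pos ha)] at hbig
    have := hT t0 ht0ge
    linarith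
  · refine ⟨SubgradAux.zsol a, hsol, a/2, 0, Or.inl (ne_of_gt (half_pos ha)), ?_⟩
    intro t _
    refine ⟨SubgradAux.zsol_apply0 a t, ?_, ?_⟩
    · rw [SubgradAux.zsol_apply1]; ring
    · rw [SubgradAux.zsol_apply2]; ring

end
end
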